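/- Let (A,[-,-,-],d) be a modified λ-differential 3-Lie algebra, A* its dual space, ad*(a1,a2)α = -α∘ad(a1,a2) (where ad(a1,a2)(a) = [a1,a2,a]) and d*α = α∘d. Let f : A×A×A → A* be trilinear skew-symmetric and g : A → A* linear, and define on A⊕A* the bracket [a1+α1,a2+α2,a3+α3]_f = [a1,a2,a3] + ad*(a2,a3)α1 + ad*(a3,a1)α2 + ad*(a1,a2)α3 + f(a1,a2,a3) and the linear map d_g(a+α) = d(a) - d*(α) + g(a). Then (A⊕A*, [-,-,-]_f, d_g) is a modified λ-differential 3-Lie algebra if and only if (f,g) is a 2-cocycle with coefficients in the representation (A*; ad*, -d*), i.e. for all a1,...,a5 ∈ A: ad*(a4,a5)f(a1,a2,a3) + f([a1,a2,a3],a4,a5) + ad*(a5,a3)f(a1,a2,a4) + f(a3,[a1,a2,a4],a5) + ad*(a3,a4)f(a1,a2,a5) + f(a3,a4,[a1,a2,a5]) - ad*(a1,a2)f(a3,a4,a5) - f(a1,a2,[a3,a4,a5]) = 0, and for all a1,a2,a3 ∈ A: ad*(a2,a3)g(a1) + f(d(a1),a2,a3) + ad*(a3,a1)g(a2) + f(a1,d(a2),a3)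 + ad*(a1,a2)g(a3) + f(a1,a2,d(a3)) + λf(a1,a2,a3) + d*(f(a1,a2,a3)) - g([a1,a2,a3]) = 0. -/

import Mathlib

open Finset

section Prelude

variable (k : Type*) {A W M : Type*} [Field k] [CharZero k]
  [AddCommGroup A] [Module k A] [AddCommGroup W] [Module k W]
  [AddCommGroup M] [Module k M]

/-- A trilinear, totally skew-symmetric map `A × A × A → W`. -/
def IsTriSkew (f : A → A → A → W) : Prop :=
  (∀ (t : k) (a a' b c : A), f (t • a + a') b c = t • f a b c + f a' b c) ∧
  (∀ (t : k) (a b b' c : A), f a (t • b + b') c = t • f a b c + f a b' c) ∧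
  (∀ (t : k) (a b c c' : A), f a b (t • c + c') = t • f a b c + f a b c') ∧
  (∀ a b c : A, f a b c = - f b a c) ∧
  (∀ a b c : A, f a b c = - f a c b)

/-- `br` makes `A` a 3-Lie algebra: it is trilinear, totally skew-symmetric and
satisfies the Filippov identity. -/
def Is3LieBr (br : A → A → A → A) : Prop :=
  IsTriSkew k br ∧
  ∀ a1 a2 a3 a4 a5 : A, br a1 a2 (br a3 a4 a5) =
    br (br a1 a2 a3) a4 a5 + br a3 (br a1 a2 a4) a5 + br a3 a4 (br a1 a2 a5)

/-- `d` is a modified `lam`-differential operator on `(A, br)`. -/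
def IsMDiffOn (br : A → A → A → A) (lam : k) (d : A → A) : Prop :=
  ∀ a b c : A, d (br a b c) =
    br (d a) b c + br a (d b) c + br a b (d c) + lam • br a b c

/-- `ρ` is a representation of the 3-Lie algebra `(A, br)` on `M`. -/
def Is3LieRep (br : A → A → A → A) (ρ : A → A → M →ₗ[k] M) : Prop :=
  (∀ (t : k) (a a' b : A), ρ (t • a + a') b = t • ρ a b + ρ a' b) ∧
  (∀ (t : k) (a b b' : A), ρ a (t • b + b') = t • ρ a b + ρ a b') ∧
  (∀ a b : A, ρ a b = - ρ b a) ∧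
  (∀ a1 a2 a3 a4 : A, ρ (br a1 a2 a3) a4 =
    ρ a2 a3 ∘ₗ ρ a1 a4 + ρ a3 a1 ∘ₗ ρ a2 a4 + ρ a1 a2 ∘ₗ ρ a3 a4) ∧
  (∀ a1 a2 a3 a4 : A, ρ a1 a2 ∘ₗ ρ a3 a4 =
    ρ a3 a4 ∘ₗ ρ a1 a2 + ρ (br a1 a2 a3) a4 + ρ a3 (br a1 a2 a4))

/-- Compatibility of `dM` making `(M, ρ, dM)` a representation of the modified
`lam`-differential 3-Lie algebra `(A, br, d)`. -/
def IsMDiffRep (ρ : A → A → M →ₗ[k] M) (lam : k) (d : A → A) (dM : M → M) : Prop :=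
  ∀ (a b : A) (v : M), dM (ρ a b v) =
    ρ (d a) b v + ρ a (d b) v + ρ a b (dM v) + lam • ρ a b v

end Prelude


set_option linter.unusedSectionVars false
set_option maxHeartbeats 1600000

lemma slot_facts {k : Type*} [Field k] {V W : Type*} [AddCommGroup V] [Module k V] [AddCommGroup W] [Module k W]
    (F : V → W) (h : ∀ (t : k) (a a' : V), F (t • a + a') = t • F a + F a') :
    (∀ a a', F (a + a') = F a + F a') ∧ (∀ (t : k) (a : V), F (t • a) = t • F a) ∧
      (F 0 = 0) ∧ (∀ a, F (-a) = - F a) := by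
  have h0 : F 0 = 0 := by
    have := h 1 0 0
    simp only [one_smul, add_zero] at this
    exact right_eq_add.mp this
  have hadd : ∀ a a', F (a + a') = F a + F a' := by
    intro a a'; have := h 1 a a'; simpa using this
  have hsmul : ∀ (t : k) (a : V), F (t • a) = t • F a := by
    intro t a; have := h t a 0; simpa [h0] using this
  refine ⟨hadd, hsmul, h0, fun a => ?_⟩
  have := hsmul (-1) a
  simpa using this

lemma Pvec {k A : Type*} [Field k] [CharZero k] [AddCommGroup A] [Module k A]
    (br : A → A → A → A)
    (s12 : ∀ a b c : A, br a b c = - br b a c)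
    (s23 : ∀ a b c : A, br a b c = - br a c b)
    (n1 : ∀ a b c : A, br (-a) b c = - br a b c)
    (n2 : ∀ a b c : A, br a (-b) c = - br a b c)
    (n3 : ∀ a b c : A, br a b (-c) = - br a b c)
    (F : ∀ a1 a2 a3 a4 a5 : A, br a1 a2 (br a3 a4 a5) =
      br (br a1 a2 a3) a4 a5 + br a3 (br a1 a2 a4) a5 + br a3 a4 (br a1 a2 a5)) :
    ∀ b x y z w : A, br b (br x y z) w + br b x (br y z w) + br b y (br z x w) +
      br b z (br x y w) = 0 := by
  intro b x y z w
  have cyc : ∀ a b c : A, br a b c = br b c a := by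
    intro a b c; rw [s12, s23 b a c, neg_neg]
  have m1 : br y (br b x z) w = br (br b z x) y w := by
    rw [s12 y (br b x z) w, s23 b x z, n1, neg_neg]
  have m2 : br z (br b y x) w = br (br b x y) z w := by
    rw [s12 z (br b y x) w, s23 b y x, n1, neg_neg]
  have m3 : br x (br b z y) w = br (br b y z) x w := by
    rw [s12 x (br b z y) w, s23 b z y, n1, neg_neg]
  have hA1 : br b x (br y z w) = br (br b x y) z w + br (br b z x) y w + br y z (br b x w) := by
    rw [F b x y z w, m1]
  have hA2 : br b y (br z x w) = br (br b y z) x w + br (br b x y) z w + br z x (br b y w) := by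
    rw [F b y z x w, m2]
  have hA3 : br b z (br x y w) = br (br b z x) y w + br (br b y z) x w + br x y (br b z w) := by
    rw [F b z x y w, m3]
  have hB1 : br y z (br b x w) = br (br b y z) x w + br b (br x y z) w + br b x (br y z w) := by
    rw [F y z b x w, ← cyc b y z, cyc x y z]
  have hB2 : br z x (br b y w) = br (br b z x) y w + br b (br x y z) w + br b y (br z x w) := by
    rw [F z x b y w, ← cyc b z x, ← cyc y z x, ← cyc x y z]
  have hB3 : br x y (br b z w) = br (br b x y) z w + br b (br x y z) w + br b z (br x y w) := by
    rw [F x y b z w, ← cyc b x y]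
  have hC : br b (br x y z) w = br y z (br b x w) + br z x (br b y w) + br x y (br b z w) := by
    have h := F b w x y z
    rw [show br b w x = -br b x w from s23 b w x,
        show br b w y = -br b y w from s23 b w y,
        show br b w z = -br b z w from s23 b w z,
        show br b w (br x y z) = -br b (br x y z) w from s23 b w (br x y z),
        n1, n2, n3, cyc (br b x w) y z,
        cyc x (br b y w) z, cyc (br b y w) z x] at h
    linear_combination (norm := module) -h
  linear_combination (norm := module) (1/3 : k) • hA1 + (1/3 : k) • hA2 + (1/3 : k) • hA3
    - (2/3 : k) • hB1 - (2/3 : k) • hB2 - (2/3 : k) • hB3 - hC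

/-- the `T*`-extension `(A ⊕ A*, [-,-,-]_f, d_g)` built from the dual
adjoint representation `(A*, ad*, -d*)` is a modified `λ`-differential 3-Lie algebra
iff `(f, g)` is a 2-cocycle with coefficients in `(A*, ad*, -d*)`. -/
theorem stmt18 {k A : Type*} [Field k] [CharZero k] [AddCommGroup A] [Module k A]
    (br : A → A → A → A) (lam : k) (d : A →ₗ[k] A)
    (h3 : Is3LieBr k br) (hd : IsMDiffOn k br lam ⇑d)
    (ad : A → A → A →ₗ[k] A) (had : ∀ a b v : A, ad a b v = br a b v)
    (f : A → A → A → Module.Dual k A) (hf : IsTriSkew k f)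
    (g : A →ₗ[k] Module.Dual k A) :
    (Is3LieBr k (fun x y z : A × Module.Dual k A =>
        ((br x.1 y.1 z.1 : A),
          (-((ad y.1 z.1).dualMap x.2) - (ad z.1 x.1).dualMap y.2 -
            (ad x.1 y.1).dualMap z.2 + f x.1 y.1 z.1 : Module.Dual k A))) ∧
      IsMDiffOn k (fun x y z : A × Module.Dual k A =>
        ((br x.1 y.1 z.1 : A),
          (-((ad y.1 z.1).dualMap x.2) - (ad z.1 x.1).dualMap y.2 -
            (ad x.1 y.1).dualMap z.2 + f x.1 y.1 z.1 : Module.Dual k A)))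
        lam
        (fun x : A × Module.Dual k A =>
          ((d x.1 : A), (-(d.dualMap x.2) + g x.1 : Module.Dual k A)))) ↔
    ((∀ a1 a2 a3 a4 a5 : A,
        -((ad a4 a5).dualMap (f a1 a2 a3)) + f (br a1 a2 a3) a4 a5 +
          -((ad a5 a3).dualMap (f a1 a2 a4)) + f a3 (br a1 a2 a4) a5 +
            -((ad a3 a4).dualMap (f a1 a2 a5)) + f a3 a4 (br a1 a2 a5) -
              -((ad a1 a2).dualMap (f a3 a4 a5)) - f a1 a2 (br a3 a4 a5) = 0) ∧
      (∀ a1 a2 a3 : A,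
        -((ad a2 a3).dualMap (g a1)) + f (d a1) a2 a3 +
          -((ad a3 a1).dualMap (g a2)) + f a1 (d a2) a3 +
            -((ad a1 a2).dualMap (g a3)) + f a1 a2 (d a3) +
              lam • f a1 a2 a3 + d.dualMap (f a1 a2 a3) - g (br a1 a2 a3) = 0)) := by
  obtain ⟨⟨bl1, bl2, bl3, bs12, bs23⟩, F⟩ := h3
  obtain ⟨fl1, fl2, fl3, fs12, fs23⟩ := hf
  have badd1 : ∀ a a' b c : A, br (a + a') b c = br a b c + br a' b c :=
    fun a a' b c => (slot_facts (k := k) (fun a => br a b c) (fun t u u' => bl1 t u u' b c)).1 a a'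
  have bsmul1 : ∀ (t : k) (a b c : A), br (t • a) b c = t • br a b c :=
    fun t a b c => (slot_facts (k := k) (fun a => br a b c) (fun t u u' => bl1 t u u' b c)).2.1 t a
  have bzero1 : ∀ b c : A, br 0 b c = 0 :=
    fun b c => (slot_facts (k := k) (fun a => br a b c) (fun t u u' => bl1 t u u' b c)).2.2.1
  have bneg1 : ∀ a b c : A, br (-a) b c = - br a b c :=
    fun a b c => (slot_facts (k := k) (fun a => br a b c) (fun t u u' => bl1 t u u' b c)).2.2.2 a
  have badd2 : ∀ a b b' c : A, br a (b + b') c = br a b c + br a b' c :=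
    fun a b b' c => (slot_facts (k := k) (fun b => br a b c) (fun t u u' => bl2 t a u u' c)).1 b b'
  have bsmul2 : ∀ (t : k) (a b c : A), br a (t • b) c = t • br a b c :=
    fun t a b c => (slot_facts (k := k) (fun b => br a b c) (fun t u u' => bl2 t a u u' c)).2.1 t b
  have bzero2 : ∀ a c : A, br a 0 c = 0 :=
    fun a c => (slot_facts (k := k) (fun b => br a b c) (fun t u u' => bl2 t a u u' c)).2.2.1
  have bneg2 : ∀ a b c : A, br a (-b) c = - br a b c :=
    fun a b c => (slot_facts (k := k) (fun b => br a b c) (fun t u u' => bl2 t a u u' c)).2.2.2 b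
  have badd3 : ∀ a b c c' : A, br a b (c + c') = br a b c + br a b c' :=
    fun a b c c' => (slot_facts (k := k) (fun c => br a b c) (fun t u u' => bl3 t a b u u')).1 c c'
  have bsmul3 : ∀ (t : k) (a b c : A), br a b (t • c) = t • br a b c :=
    fun t a b c => (slot_facts (k := k) (fun c => br a b c) (fun t u u' => bl3 t a b u u')).2.1 t c
  have bzero3 : ∀ a b : A, br a b 0 = 0 :=
    fun a b => (slot_facts (k := k) (fun c => br a b c) (fun t u u' => bl3 t a b u u')).2.2.1
  have bneg3 : ∀ a b c : A, br a b (-c) = - br a b c :=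
    fun a b c => (slot_facts (k := k) (fun c => br a b c) (fun t u u' => bl3 t a b u u')).2.2.2 c
  have P := Pvec (k := k) br bs12 bs23 bneg1 bneg2 bneg3 F
  have phib12 : ∀ (φ : Module.Dual k A) (u v w : A), φ (br u v w) = -φ (br v u w) := by
    intro φ u v w; rw [bs12 u v w, map_neg]
  have phib23 : ∀ (φ : Module.Dual k A) (u v w : A), φ (br u v w) = -φ (br u w v) := by
    intro φ u v w; rw [bs23 u v w, map_neg]
  have phif12 : ∀ (u v w a : A), (f u v w) a = -((f v u w) a) := by
    intro u v w a; rw [fs12 u v w, LinearMap.neg_apply]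
  have phif23 : ∀ (u v w a : A), (f u v w) a = -((f u w v) a) := by
    intro u v w a; rw [fs23 u v w, LinearMap.neg_apply]
  have Pphi : ∀ (φ : Module.Dual k A) (b x y z w : A),
      φ (br b (br x y z) w) + φ (br b x (br y z w)) + φ (br b y (br z x w)) +
        φ (br b z (br x y w)) = 0 := by
    intro φ b x y z w
    rw [← map_add, ← map_add, ← map_add, P b x y z w, map_zero]
  have Fphi : ∀ (φ : Module.Dual k A) (a1 a2 a3 a4 a5 : A),
      φ (br a1 a2 (br a3 a4 a5)) = φ (br (br a1 a2 a3) a4 a5) + φ (br a3 (br a1 a2 a4) a5) +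
        φ (br a3 a4 (br a1 a2 a5)) := by
    intro φ a1 a2 a3 a4 a5
    rw [F a1 a2 a3 a4 a5, map_add, map_add]
  have hdphi : ∀ (φ : Module.Dual k A) (a b c : A), φ (d (br a b c)) =
      φ (br (d a) b c) + φ (br a (d b) c) + φ (br a b (d c)) + lam * φ (br a b c) := by
    intro φ a b c
    rw [hd a b c, map_add, map_add, map_add, map_smul, smul_eq_mul]
  constructor
  · rintro ⟨⟨_, hFil⟩, hDiff⟩
    constructor
    · intro a1 a2 a3 a4 a5
      have h := congrArg Prod.snd (hFil (a1, 0) (a2, 0) (a3, 0) (a4, 0) (a5, 0))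
      simp only [map_zero, neg_zero, sub_zero, zero_sub, add_zero, zero_add] at h
      simp only [Prod.snd_add] at h
      linear_combination (norm := module) -h
    · intro a1 a2 a3
      have h := congrArg Prod.snd (hDiff (a1, 0) (a2, 0) (a3, 0))
      simp only [map_zero, neg_zero, sub_zero, zero_sub, add_zero, zero_add, Prod.snd_add, Prod.smul_snd] at h
      linear_combination (norm := module) -h
  · rintro ⟨C1, C2⟩
    refine ⟨⟨⟨?_, ?_, ?_, ?_, ?_⟩, ?_⟩, ?_⟩
    · intro t x x' y z
      clear C1 C2 P F hd
      refine Prod.ext ?_ ?_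
      · simp only [Prod.fst_add, Prod.smul_fst, bl1]
      · apply LinearMap.ext; intro a
        simp only [Prod.fst_add, Prod.smul_fst, Prod.snd_add, Prod.smul_snd,
          LinearMap.dualMap_apply, LinearMap.add_apply, LinearMap.smul_apply,
          LinearMap.neg_apply, LinearMap.sub_apply, had, bl1, bl2, fl1,
          map_add, map_smul, smul_eq_mul]
        ring
    · intro t x y y' z
      refine Prod.ext ?_ ?_
      · simp only [Prod.fst_add, Prod.smul_fst, bl2]
      · apply LinearMap.ext; intro a
        simp only [Prod.fst_add, Prod.smul_fst, Prod.snd_add, Prod.smul_snd,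
          LinearMap.dualMap_apply, LinearMap.add_apply, LinearMap.smul_apply,
          LinearMap.neg_apply, LinearMap.sub_apply, had, bl1, bl2, bl3, fl2,
          map_add, map_smul, smul_eq_mul]
        ring
    · intro t x y z z'
      refine Prod.ext ?_ ?_
      · simp only [Prod.fst_add, Prod.smul_fst, bl3]
      · apply LinearMap.ext; intro a
        simp only [Prod.fst_add, Prod.smul_fst, Prod.snd_add, Prod.smul_snd,
          LinearMap.dualMap_apply, LinearMap.add_apply, LinearMap.smul_apply,
          LinearMap.neg_apply, LinearMap.sub_apply, had, bl1, bl2, bl3, fl3,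
          map_add, map_smul, smul_eq_mul]
        ring
    · intro x y z
      refine Prod.ext ?_ ?_
      · simpa using bs12 x.1 y.1 z.1
      · apply LinearMap.ext; intro a
        simp only [Prod.snd_neg, Prod.fst_neg, LinearMap.dualMap_apply, LinearMap.add_apply,
          LinearMap.neg_apply, LinearMap.sub_apply, had]
        linear_combination -(phib12 x.2 y.1 z.1 a) - phib12 y.2 z.1 x.1 a -
          phib12 z.2 x.1 y.1 a + phif12 x.1 y.1 z.1 a
    · intro x y z
      refine Prod.ext ?_ ?_
      · simpa using bs23 x.1 y.1 z.1
      · apply LinearMap.ext; intro a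
        simp only [Prod.snd_neg, Prod.fst_neg, LinearMap.dualMap_apply, LinearMap.add_apply,
          LinearMap.neg_apply, LinearMap.sub_apply, had]
        linear_combination -(phib12 x.2 y.1 z.1 a) - phib12 y.2 z.1 x.1 a -
          phib12 z.2 x.1 y.1 a + phif23 x.1 y.1 z.1 a
    · intro x1 x2 x3 x4 x5
      refine Prod.ext ?_ ?_
      · simpa using F x1.1 x2.1 x3.1 x4.1 x5.1
      · apply LinearMap.ext; intro a
        have c1a := LinearMap.congr_fun (C1 x1.1 x2.1 x3.1 x4.1 x5.1) a
        simp only [LinearMap.dualMap_apply, LinearMap.add_apply, LinearMap.neg_apply,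
          LinearMap.sub_apply, LinearMap.zero_apply, had] at c1a
        simp only [Prod.snd_add, Prod.fst_add, LinearMap.dualMap_apply, LinearMap.add_apply,
          LinearMap.neg_apply, LinearMap.sub_apply, had, map_add, map_sub, map_neg]
        linear_combination -(Pphi x1.2 x2.1 x3.1 x4.1 x5.1 a)
          + Pphi x2.2 x1.1 x3.1 x4.1 x5.1 a
          - phib12 x2.2 (br x3.1 x4.1 x5.1) x1.1 a
          - phib12 x2.2 x3.1 x1.1 (br x4.1 x5.1 a)
          - phib12 x2.2 x4.1 x1.1 (br x5.1 x3.1 a)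
          - phib12 x2.2 x5.1 x1.1 (br x3.1 x4.1 a)
          - Fphi x3.2 x1.1 x2.1 x4.1 x5.1 a
          - Fphi x4.2 x1.1 x2.1 x5.1 x3.1 a
          - Fphi x5.2 x1.1 x2.1 x3.1 x4.1 a
          - c1a
    · intro x y z
      refine Prod.ext ?_ ?_
      · simpa using hd x.1 y.1 z.1
      · apply LinearMap.ext; intro a
        have c2a := LinearMap.congr_fun (C2 x.1 y.1 z.1) a
        simp only [LinearMap.dualMap_apply, LinearMap.add_apply, LinearMap.neg_apply,
          LinearMap.sub_apply, LinearMap.zero_apply, LinearMap.smul_apply, had,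
          smul_eq_mul] at c2a
        simp only [Prod.snd_add, Prod.fst_add, Prod.smul_snd, Prod.smul_fst,
          LinearMap.dualMap_apply, LinearMap.add_apply, LinearMap.neg_apply,
          LinearMap.sub_apply, LinearMap.smul_apply, had, map_add, map_sub, map_neg,
          smul_eq_mul]
        linear_combination -hdphi x.2 y.1 z.1 a - hdphi y.2 z.1 x.1 a - hdphi z.2 x.1 y.1 a - c2a
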